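/- arXiv:2508.17808 — 3 statements merged into one kernel-verified Lean document; each statement's English description precedes it below -/
import Mathlib

section
/- Let A, B be skew-Hermitian n×n matrices and Δ > 0. Then ‖e^{(A+B)Δ} − e^{AΔ/2} e^{BΔ} e^{AΔ/2}‖ ≤ C·Δ³ for a constant C depending only on ‖A‖ and ‖B‖: the symmetric (Strang) splitting has local error of third order. -/
attribute [local instance] Matrix.linftyOpNormedAddCommGroup Matrix.linftyOpNormedRing
  Matrix.linftyOpNormedAlgebra

open NormedSpace Nat
open scoped NNReal

section PolyAux

variable {𝔸 : Type*} [Ring 𝔸] [Algebra ℂ 𝔸]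

/-- The quadratic Taylor polynomial of the exponential. -/
noncomputable def strangPq (z : 𝔸) : 𝔸 := 1 + z + (2:ℂ)⁻¹ • (z * z)

noncomputable def strangM3 (A B : 𝔸) : 𝔸 :=
  -((1/8 : ℂ) • (A*(A*A))) - (1/8 : ℂ) • (A*(A*B)) - (1/4 : ℂ) • (A*(B*A))
   - (1/4 : ℂ) • (A*(B*B)) - (1/8 : ℂ) • (B*(A*A)) - (1/4 : ℂ) • (B*(B*A))

noncomputable def strangM4 (A B : 𝔸) : 𝔸 :=
  -((1/64 : ℂ) • (A*(A*(A*A)))) - (1/16 : ℂ) • (A*(A*(B*A))) - (1/16 : ℂ) • (A*(A*(B*B)))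
   - (1/16 : ℂ) • (A*(B*(A*A))) - (1/8 : ℂ) • (A*(B*(B*A))) - (1/16 : ℂ) • (B*(B*(A*A)))

noncomputable def strangM5 (A B : 𝔸) : 𝔸 :=
  -((1/64 : ℂ) • (A*(A*(B*(A*A))))) - (1/32 : ℂ) • (A*(A*(B*(B*A))))
   - (1/32 : ℂ) • (A*(B*(B*(A*A))))

noncomputable def strangM6 (A B : 𝔸) : 𝔸 :=
  -((1/128 : ℂ) • (A*(A*(B*(B*(A*A))))))

theorem strangId (t : ℂ) (A B : 𝔸) :
    strangPq (t • (A + B)) - strangPq ((t/2) • A) * strangPq (t • B) * strangPq ((t/2) • A)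
      = t^3 • strangM3 A B + t^4 • strangM4 A B + t^5 • strangM5 A B + t^6 • strangM6 A B := by
  simp only [strangPq, strangM3, strangM4, strangM5, strangM6, smul_add, mul_add, add_mul,
    smul_mul_assoc, mul_smul_comm, smul_smul, one_mul, mul_one, mul_assoc]
  module

end PolyAux

section NormAux

variable {𝔸 : Type*} [NormedRing 𝔸] [NormedAlgebra ℂ 𝔸] [CompleteSpace 𝔸] [NormOneClass 𝔸]

omit [CompleteSpace 𝔸] in
lemma strang_term_norm (z : 𝔸) (k : ℕ) : ‖(k !⁻¹ : ℂ) • z ^ k‖ ≤ ‖z‖ ^ k / k ! := by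
  rw [norm_smul]
  have h1 : ‖(k !⁻¹ : ℂ)‖ = (k ! : ℝ)⁻¹ := by
    rw [norm_inv]; norm_num
  rw [h1, div_eq_inv_mul]
  gcongr
  exact norm_pow_le z k

lemma strang_norm_exp_le (z : 𝔸) : ‖exp z‖ ≤ Real.exp ‖z‖ := by
  rw [exp_eq_tsum ℂ]
  refine le_trans (norm_tsum_le_tsum_norm (norm_expSeries_summable' z)) ?_
  rw [Real.exp_eq_exp_ℝ, exp_eq_tsum_div]
  exact Summable.tsum_le_tsum (fun k => strang_term_norm z k) (norm_expSeries_summable' z)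
    (Real.summable_pow_div_factorial ‖z‖)

omit [CompleteSpace 𝔸] [NormOneClass 𝔸] in
lemma strangPq_eq_sum (z : 𝔸) : strangPq z = ∑ k ∈ Finset.range 3, (k !⁻¹ : ℂ) • z ^ k := by
  simp [strangPq, Finset.sum_range_succ, pow_two]

omit [CompleteSpace 𝔸] in
lemma strang_norm_Pq_le (z : 𝔸) : ‖strangPq z‖ ≤ Real.exp ‖z‖ := by
  rw [strangPq_eq_sum]
  refine le_trans (norm_sum_le _ _) ?_
  refine le_trans (Finset.sum_le_sum fun k _ => strang_term_norm z k) ?_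
  exact Real.sum_le_exp_of_nonneg (norm_nonneg z) 3

lemma strang_norm_exp_sub_Pq_le (z : 𝔸) :
    ‖exp z - strangPq z‖ ≤ ‖z‖^3 * Real.exp ‖z‖ := by
  have hs : Summable fun k => (k !⁻¹ : ℂ) • z ^ k := expSeries_summable' z
  have key : exp z - strangPq z = ∑' k, ((k+3)!⁻¹ : ℂ) • z ^ (k+3) := by
    rw [exp_eq_tsum ℂ, strangPq_eq_sum, eq_comm, eq_sub_iff_add_eq, add_comm]
    exact hs.sum_add_tsum_nat_add 3
  rw [key]
  have hsn : Summable fun k => ‖((k+3)!⁻¹ : ℂ) • z ^ (k+3)‖ :=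
    (summable_nat_add_iff 3).2 (norm_expSeries_summable' z)
  refine le_trans (norm_tsum_le_tsum_norm hsn) ?_
  have hterm : ∀ k, ‖((k+3)!⁻¹ : ℂ) • z ^ (k+3)‖ ≤ ‖z‖^3 * (‖z‖ ^ k / k !) := by
    intro k
    refine le_trans (strang_term_norm z (k+3)) ?_
    calc ‖z‖^(k+3) / ((k+3)! : ℝ) ≤ ‖z‖^(k+3) / (k ! : ℝ) := by
          have h0 : (0:ℝ) < (k ! : ℝ) := Nat.cast_pos.mpr k.factorial_pos
          have h1 : ((k:ℕ) ! : ℝ) ≤ (((k+3) : ℕ)! : ℝ) := by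
            exact_mod_cast Nat.factorial_le (Nat.le_add_right k 3)
          exact div_le_div_of_nonneg_left (by positivity) h0 h1
      _ = ‖z‖^3 * (‖z‖ ^ k / k !) := by rw [pow_add]; ring
  refine le_trans (Summable.tsum_le_tsum hterm hsn
    ((Real.summable_pow_div_factorial ‖z‖).mul_left _)) ?_
  rw [tsum_mul_left, Real.exp_eq_exp_ℝ, exp_eq_tsum_div]

end NormAux

lemma strang_norm_unitary_le {n : ℕ} {U : Matrix (Fin n) (Fin n) ℂ}
    (hU : U ∈ Matrix.unitaryGroup (Fin n) ℂ) : ‖U‖ ≤ n := by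
  rw [Matrix.linfty_opNorm_def]
  have : ((n : ℝ≥0) : ℝ) = (n : ℝ) := by norm_num
  rw [← this, NNReal.coe_le_coe]
  refine Finset.sup_le fun i _ => ?_
  calc ∑ j, ‖U i j‖₊ ≤ ∑ _j : Fin n, 1 :=
        Finset.sum_le_sum fun j _ => by
          have := entry_norm_bound_of_unitary hU i j
          rwa [← NNReal.coe_le_coe, coe_nnnorm, NNReal.coe_one]
    _ = n := by simp

lemma strang_norm_exp_skew_le {n : ℕ} (M : Matrix (Fin n) (Fin n) ℂ)
    (h : M.conjTranspose = -M) : ‖exp M‖ ≤ n := by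
  have hmem : M ∈ skewAdjoint (Matrix (Fin n) (Fin n) ℂ) := by
    rw [skewAdjoint.mem_iff]
    simpa [Matrix.star_eq_conjTranspose] using h
  haveI : @ContinuousStar (Matrix (Fin n) (Fin n) ℂ)
      (Matrix.linftyOpNormedRing : NormedRing (Matrix (Fin n) (Fin n) ℂ)).toMetricSpace.toPseudoMetricSpace.toUniformSpace.toTopologicalSpace
      _ := ⟨continuous_id.matrix_conjTranspose⟩
  have hu : exp M ∈ unitary (Matrix (Fin n) (Fin n) ℂ) :=
    exp_mem_unitary_of_mem_skewAdjoint hmem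
  exact strang_norm_unitary_le hu

lemma strang_arith (Δ a E SM N : ℝ) (hΔ : 0 ≤ Δ) (ha0 : 0 ≤ a) (hE1 : 1 ≤ E)
    (hSM0 : 0 ≤ SM) (hN : 0 ≤ N) :
    Δ^3*(a^3*E) + 3*(Δ^3*(a^3*E)*E*E) + Δ^3*SM
      ≤ (N + N^3 + (4*(a^3*E^3)+SM))*Δ^3 := by
  have hE3 : E ≤ E^3 := by nlinarith [sq_nonneg E]
  have h1 : a^3*E ≤ a^3*E^3 := mul_le_mul_of_nonneg_left hE3 (pow_nonneg ha0 3)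
  have hP : 0 ≤ Δ^3 := pow_nonneg hΔ 3
  have hN3 : 0 ≤ N^3 := pow_nonneg hN 3
  calc Δ^3*(a^3*E) + 3*(Δ^3*(a^3*E)*E*E) + Δ^3*SM
      = Δ^3 * ((a^3*E) + 3*((a^3*E)*E*E) + SM) := by ring
    _ ≤ Δ^3 * (N + N^3 + (4*(a^3*E^3)+SM)) := by
        refine mul_le_mul_of_nonneg_left ?_ hP
        have h2 : 3*((a^3*E)*E*E) = 3*(a^3*E^3) := by ring
        linarith [h1, hN3, hN, h2]
    _ = (N + N^3 + (4*(a^3*E^3)+SM))*Δ^3 := by ring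

set_option maxHeartbeats 1600000 in
/-- For skew-Hermitian `n×n` matrices `A, B`, the symmetric (Strang)
splitting has local error of third order:
`‖e^{(A+B)Δ} − e^{AΔ/2} e^{BΔ} e^{AΔ/2}‖ ≤ C·Δ³` for a constant `C` depending only on
`‖A‖` and `‖B‖`. -/
theorem strang_splitting_third_order
    (n : ℕ) (A B : Matrix (Fin n) (Fin n) ℂ)
    (hA : A.conjTranspose = -A) (hB : B.conjTranspose = -B) :
    ∃ C : ℝ, 0 ≤ C ∧ ∀ Δ : ℝ, 0 < Δ →
      ‖NormedSpace.exp (Δ • (A + B)) -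
        NormedSpace.exp ((Δ / 2) • A) * NormedSpace.exp (Δ • B) *
          NormedSpace.exp ((Δ / 2) • A)‖ ≤ C * Δ ^ 3 := by
  rcases Nat.eq_zero_or_pos n with hn | hn
  · subst hn
    refine ⟨1, zero_le_one, fun Δ hΔ => ?_⟩
    have hz : ∀ X : Matrix (Fin 0) (Fin 0) ℂ, X = 0 := fun X => by
      ext i j; exact i.elim0
    rw [hz (_ - _), norm_zero]
    positivity
  haveI : Nonempty (Fin n) := Fin.pos_iff_nonempty.mp hn
  set a := ‖A‖ + ‖B‖ with ha
  have ha0 : 0 ≤ a := by positivity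
  set E := Real.exp a with hE
  have hE1 : 1 ≤ E := Real.one_le_exp ha0
  set K := a^3 * E^3 with hK
  set SM := ‖strangM3 A B‖ + ‖strangM4 A B‖ + ‖strangM5 A B‖ + ‖strangM6 A B‖ with hSM
  have hSM0 : 0 ≤ SM := by positivity
  refine ⟨(n:ℝ) + (n:ℝ)^3 + (4*K + SM), by positivity, fun Δ hΔ => ?_⟩
  -- convert real smul to complex smul
  have hsmul : ∀ (r : ℝ) (M : Matrix (Fin n) (Fin n) ℂ), r • M = (r:ℂ) • M := by
    intro r M
    ext i j
    simp [Matrix.smul_apply, Complex.real_smul]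
  rw [hsmul Δ (A+B), hsmul (Δ/2) A, hsmul Δ B]
  have hhalf : ((Δ/2 : ℝ) : ℂ) = (Δ:ℂ)/2 := by push_cast; ring
  rw [hhalf]
  set t := (Δ:ℂ) with ht
  have hnt : ‖t‖ = Δ := by
    rw [ht, Complex.norm_real, Real.norm_eq_abs, abs_of_pos hΔ]
  -- skew-adjointness of the pieces
  have hstar_t : star t = t := by simp [ht, Complex.star_def, Complex.conj_ofReal]
  have hskew : ∀ (c : ℂ) (M : Matrix (Fin n) (Fin n) ℂ), star c = c → M.conjTranspose = -M →
      ((c • M).conjTranspose : Matrix (Fin n) (Fin n) ℂ) = -(c • M) := by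
    intro c M hc hM
    rw [Matrix.conjTranspose_smul, hc, hM, smul_neg]
  have hskewAB : (A + B).conjTranspose = -(A+B) := by
    rw [Matrix.conjTranspose_add, hA, hB]; abel
  have hs1 : ((t • (A+B)).conjTranspose : Matrix (Fin n) (Fin n) ℂ) = -(t • (A+B)) :=
    hskew t (A+B) hstar_t hskewAB
  have hs2 : (((t/2) • A).conjTranspose : Matrix (Fin n) (Fin n) ℂ) = -((t/2) • A) :=
    hskew (t/2) A (by rw [star_div₀, hstar_t]; norm_num) hA
  have hs3 : ((t • B).conjTranspose : Matrix (Fin n) (Fin n) ℂ) = -(t • B) :=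
    hskew t B hstar_t hB
  rcases le_or_gt Δ 1 with hΔ1 | hΔ1
  · -- small Δ
    set u1 := (t/2) • A with hu1
    set u2 := t • B with hu2
    set s := t • (A + B) with hs
    have hb1 : ‖u1‖ ≤ Δ * a := by
      rw [hu1, norm_smul, norm_div, hnt]
      have : ‖(2:ℂ)‖ = 2 := by norm_num
      rw [this]
      have hAa : ‖A‖ ≤ a := le_add_of_nonneg_right (norm_nonneg B)
      calc Δ / 2 * ‖A‖ ≤ Δ * ‖A‖ :=
            mul_le_mul_of_nonneg_right (by linarith) (norm_nonneg A)
        _ ≤ Δ * a := mul_le_mul_of_nonneg_left hAa hΔ.le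
    have hb2 : ‖u2‖ ≤ Δ * a := by
      rw [hu2, norm_smul, hnt]
      have hBa : ‖B‖ ≤ a := le_add_of_nonneg_left (norm_nonneg A)
      exact mul_le_mul_of_nonneg_left hBa hΔ.le
    have hbs : ‖s‖ ≤ Δ * a := by
      rw [hs, norm_smul, hnt]
      exact mul_le_mul_of_nonneg_left (norm_add_le A B) hΔ.le
    have hΔa : Δ * a ≤ a := mul_le_of_le_one_left ha0 hΔ1
    have hrem : ∀ z : Matrix (Fin n) (Fin n) ℂ, ‖z‖ ≤ Δ * a →
        ‖exp z - strangPq z‖ ≤ Δ^3 * (a^3 * E) := by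
      intro z hz
      refine le_trans (strang_norm_exp_sub_Pq_le z) ?_
      have h1 : ‖z‖^3 ≤ (Δ*a)^3 :=
        pow_le_pow_left₀ (norm_nonneg z) hz 3
      have h2 : Real.exp ‖z‖ ≤ E := by
        rw [hE]; exact Real.exp_le_exp.mpr (hz.trans hΔa)
      calc ‖z‖^3 * Real.exp ‖z‖ ≤ (Δ*a)^3 * E := by
            apply mul_le_mul h1 h2 (Real.exp_pos _).le (by positivity)
        _ = Δ^3 * (a^3 * E) := by ring
    have hexpb : ∀ z : Matrix (Fin n) (Fin n) ℂ, ‖z‖ ≤ Δ * a → ‖exp z‖ ≤ E := by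
      intro z hz
      refine le_trans (strang_norm_exp_le z) ?_
      rw [hE]; exact Real.exp_le_exp.mpr (hz.trans hΔa)
    have hPb : ∀ z : Matrix (Fin n) (Fin n) ℂ, ‖z‖ ≤ Δ * a → ‖strangPq z‖ ≤ E := by
      intro z hz
      refine le_trans (strang_norm_Pq_le z) ?_
      rw [hE]; exact Real.exp_le_exp.mpr (hz.trans hΔa)
    have hdec : exp s - exp u1 * exp u2 * exp u1 =
        (exp s - strangPq s)
        - ((exp u1 - strangPq u1) * exp u2 * exp u1
           + strangPq u1 * (exp u2 - strangPq u2) * exp u1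
           + strangPq u1 * strangPq u2 * (exp u1 - strangPq u1))
        + (strangPq s - strangPq u1 * strangPq u2 * strangPq u1) := by
      simp only [sub_mul, mul_sub]
      abel
    rw [hdec]
    have t1 : ‖exp s - strangPq s‖ ≤ Δ^3 * (a^3 * E) := hrem s hbs
    have t2 : ‖(exp u1 - strangPq u1) * exp u2 * exp u1
           + strangPq u1 * (exp u2 - strangPq u2) * exp u1
           + strangPq u1 * strangPq u2 * (exp u1 - strangPq u1)‖
        ≤ 3 * (Δ^3 * (a^3 * E) * E * E) := by
      have e1 : ‖(exp u1 - strangPq u1) * exp u2 * exp u1‖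
          ≤ Δ^3 * (a^3 * E) * E * E := by
        refine le_trans (norm_mul_le _ _) ?_
        refine mul_le_mul (le_trans (norm_mul_le _ _) ?_) (hexpb u1 hb1)
          (norm_nonneg _) (by positivity)
        exact mul_le_mul (hrem u1 hb1) (hexpb u2 hb2) (norm_nonneg _) (by positivity)
      have e2 : ‖strangPq u1 * (exp u2 - strangPq u2) * exp u1‖
          ≤ E * (Δ^3 * (a^3 * E)) * E := by
        refine le_trans (norm_mul_le _ _) ?_
        refine mul_le_mul (le_trans (norm_mul_le _ _) ?_) (hexpb u1 hb1)
          (norm_nonneg _) (by positivity)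
        exact mul_le_mul (hPb u1 hb1) (hrem u2 hb2) (norm_nonneg _) (by positivity)
      have e3 : ‖strangPq u1 * strangPq u2 * (exp u1 - strangPq u1)‖
          ≤ E * E * (Δ^3 * (a^3 * E)) := by
        refine le_trans (norm_mul_le _ _) ?_
        refine mul_le_mul (le_trans (norm_mul_le _ _) ?_) (hrem u1 hb1)
          (norm_nonneg _) (by positivity)
        exact mul_le_mul (hPb u1 hb1) (hPb u2 hb2) (norm_nonneg _) (by positivity)
      refine le_trans norm_add₃_le ?_
      linarith [e1, e2, e3]
    have t3 : ‖strangPq s - strangPq u1 * strangPq u2 * strangPq u1‖ ≤ Δ^3 * SM := by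
      rw [hs, hu1, hu2, strangId t A B]
      have hpw : ∀ k : ℕ, 3 ≤ k → ‖t‖^k ≤ Δ^3 := by
        intro k hk
        rw [hnt]
        exact pow_le_pow_of_le_one hΔ.le hΔ1 hk
      have hterm : ∀ (k : ℕ) (M : Matrix (Fin n) (Fin n) ℂ), 3 ≤ k →
          ‖t^k • M‖ ≤ Δ^3 * ‖M‖ := by
        intro k M hk
        rw [norm_smul, norm_pow]
        exact mul_le_mul_of_nonneg_right (hpw k hk) (norm_nonneg M)
      have n3 := hterm 3 (strangM3 A B) le_rfl
      have n4 := hterm 4 (strangM4 A B) (by norm_num)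
      have n5 := hterm 5 (strangM5 A B) (by norm_num)
      have n6 := hterm 6 (strangM6 A B) (by norm_num)
      refine le_trans (norm_add_le _ _) ?_
      refine le_trans (add_le_add norm_add₃_le le_rfl) ?_
      have hSM' : Δ^3 * SM = Δ^3 * ‖strangM3 A B‖ + Δ^3 * ‖strangM4 A B‖
          + Δ^3 * ‖strangM5 A B‖ + Δ^3 * ‖strangM6 A B‖ := by rw [hSM]; ring
      linarith [n3, n4, n5, n6, hSM']
    refine le_trans (norm_add_le _ _) ?_
    refine le_trans (add_le_add (norm_sub_le _ _) le_rfl) ?_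
    have hn0' : (0:ℝ) ≤ (n:ℝ) := Nat.cast_nonneg n
    have hsum : ‖exp s - strangPq s‖
        + ‖(exp u1 - strangPq u1) * exp u2 * exp u1
           + strangPq u1 * (exp u2 - strangPq u2) * exp u1
           + strangPq u1 * strangPq u2 * (exp u1 - strangPq u1)‖
        + ‖strangPq s - strangPq u1 * strangPq u2 * strangPq u1‖
        ≤ Δ^3*(a^3*E) + 3*(Δ^3*(a^3*E)*E*E) + Δ^3*SM := by
      linarith [t1, t2, t3]
    refine le_trans hsum ?_
    rw [hK]
    exact strang_arith Δ a E SM n hΔ.le ha0 hE1 hSM0 hn0'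
  · -- large Δ
    have b1 : ‖exp (t • (A+B))‖ ≤ n := strang_norm_exp_skew_le _ hs1
    have b2 : ‖exp ((t/2) • A)‖ ≤ n := strang_norm_exp_skew_le _ hs2
    have b3 : ‖exp (t • B)‖ ≤ n := strang_norm_exp_skew_le _ hs3
    have hn0 : (0:ℝ) ≤ n := Nat.cast_nonneg n
    have hprod : ‖exp ((t/2) • A) * exp (t • B) * exp ((t/2) • A)‖ ≤ (n:ℝ)^3 := by
      refine le_trans (norm_mul_le _ _) ?_
      have : ‖exp ((t/2) • A) * exp (t • B)‖ ≤ (n:ℝ)*(n:ℝ) :=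
        le_trans (norm_mul_le _ _) (mul_le_mul b2 b3 (norm_nonneg _) hn0)
      calc ‖exp ((t/2) • A) * exp (t • B)‖ * ‖exp ((t/2) • A)‖
          ≤ ((n:ℝ)*(n:ℝ)) * (n:ℝ) :=
            mul_le_mul this b2 (norm_nonneg _) (by positivity)
        _ = (n:ℝ)^3 := by ring
    have hΔ3 : 1 ≤ Δ^3 := by
      calc (1:ℝ) = 1^3 := by norm_num
        _ ≤ Δ^3 := pow_le_pow_left₀ (by norm_num) hΔ1.le 3
    have hK0 : 0 ≤ K := by positivity
    have hbase : (0:ℝ) ≤ (n:ℝ) + (n:ℝ)^3 := by positivity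
    refine le_trans (norm_sub_le _ _) ?_
    calc ‖exp (t • (A+B))‖ + ‖exp ((t/2) • A) * exp (t • B) * exp ((t/2) • A)‖
        ≤ (n:ℝ) + (n:ℝ)^3 := by linarith
      _ ≤ ((n:ℝ) + (n:ℝ)^3 + (4*K + SM)) * 1 := by linarith
      _ ≤ ((n:ℝ) + (n:ℝ)^3 + (4*K + SM)) * Δ^3 :=
          mul_le_mul_of_nonneg_left hΔ3 (by linarith)
end

section
/- Let c : [0,1] → M_n(ℂ) be a continuously differentiable curve of skew-Hermitian matrices and let U(t+Δ, t) be the time-ordered exponential solving U' = c(t)U, U(t,t) = 1. Then ‖U(t+Δ,t) − exp(c(t+Δ/2)·Δ)‖ ≤ C·Δ³ for a constant C depending on sup‖c‖, sup‖c'‖, sup‖c''‖: the midpoint exponential approximates the time-ordered exponential to third order locally. -/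
attribute [local instance] Matrix.linftyOpNormedAddCommGroup Matrix.linftyOpNormedRing
  Matrix.linftyOpNormedAlgebra

open NormedSpace Matrix

section Aux

-- norm from entry bounds
lemma aux_norm_le_of_entry_le {n : ℕ} (A : Matrix (Fin n) (Fin n) ℂ)
    (h : ∀ i j, ‖A i j‖ ≤ 1) : ‖A‖ ≤ n := by
  rw [Matrix.linfty_opNorm_def]
  have : ((Finset.univ : Finset (Fin n)).sup fun i => ∑ j, ‖A i j‖₊ : NNReal) ≤ (n : NNReal) := by
    refine Finset.sup_le fun i _ => ?_
    calc ∑ j, ‖A i j‖₊ ≤ ∑ _j : Fin n, 1 := Finset.sum_le_sum fun j _ => by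
            simpa [← NNReal.coe_le_coe] using h i j
      _ = n := by simp
  exact_mod_cast this

-- entries of a matrix with Aᴴ * A = 1 are ≤ 1
lemma aux_entry_le_one {n : ℕ} (A : Matrix (Fin n) (Fin n) ℂ)
    (h : A.conjTranspose * A = 1) (i j : Fin n) : ‖A i j‖ ≤ 1 := by
  have h1 : (A.conjTranspose * A) j j = 1 := by rw [h]; simp
  rw [Matrix.mul_apply] at h1
  have h2 : (∑ k, (Complex.normSq (A k j) : ℂ)) = 1 := by
    rw [← h1]
    refine Finset.sum_congr rfl fun k _ => ?_
    simp [Matrix.conjTranspose_apply, Complex.normSq_eq_conj_mul_self]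
  have h3 : (∑ k, Complex.normSq (A k j)) = 1 := by exact_mod_cast h2
  have h4 : Complex.normSq (A i j) ≤ 1 := by
    rw [← h3]
    exact Finset.single_le_sum (f := fun k => Complex.normSq (A k j))
      (fun k _ => Complex.normSq_nonneg _) (Finset.mem_univ i)
  have h5 : ‖A i j‖ ^ 2 ≤ 1 := by rwa [← Complex.sq_norm] at h4
  nlinarith [norm_nonneg (A i j)]

lemma aux_norm_unitary {n : ℕ} (A : Matrix (Fin n) (Fin n) ℂ)
    (h : A.conjTranspose * A = 1) : ‖A‖ ≤ n := by
  have h' : A * A.conjTranspose = 1 := (mul_eq_one_comm).mp h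
  have : Aᴴᴴ * Aᴴ = 1 := by simpa using h'
  exact aux_norm_le_of_entry_le A fun i j => by
    simpa [Matrix.conjTranspose_apply] using aux_entry_le_one Aᴴ this j i

noncomputable def ctCLM (n : ℕ) : Matrix (Fin n) (Fin n) ℂ →L[ℝ] Matrix (Fin n) (Fin n) ℂ :=
  LinearMap.toContinuousLinearMap
    { toFun := fun A => Aᴴ
      map_add' := fun A B => Matrix.conjTranspose_add A B
      map_smul' := fun r A => by
        ext i j
        simp [Matrix.conjTranspose_apply, Matrix.smul_apply, star_smul] }

@[simp] lemma ctCLM_apply {n : ℕ} (A : Matrix (Fin n) (Fin n) ℂ) : ctCLM n A = Aᴴ := rfl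

lemma aux_hasDerivAt_ct {n : ℕ} {f : ℝ → Matrix (Fin n) (Fin n) ℂ} {f' : Matrix (Fin n) (Fin n) ℂ}
    {x : ℝ} (hf : HasDerivAt f f' x) : HasDerivAt (fun s => (f s)ᴴ) f'ᴴ x := by
  exact ((ctCLM n).hasFDerivAt.comp_hasDerivAt x hf)

lemma aux_U_unitary {n : ℕ} (c : ℝ → Matrix (Fin n) (Fin n) ℂ)
    (hskew : ∀ t, (c t).conjTranspose = -(c t))
    (U : ℝ → ℝ → Matrix (Fin n) (Fin n) ℂ)
    (hU1 : ∀ t, U t t = 1)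
    (hUderiv : ∀ t s, HasDerivAt (fun r => U r t) (c s * U s t) s) :
    ∀ t s, (U s t)ᴴ * U s t = 1 := by
  intro t s
  set W : ℝ → Matrix (Fin n) (Fin n) ℂ := fun s => (U s t)ᴴ * U s t with hW
  have hWderiv : ∀ r, HasDerivAt W ((c r * U r t)ᴴ * U r t + (U r t)ᴴ * (c r * U r t)) r :=
    fun r => (aux_hasDerivAt_ct (hUderiv t r)).mul (hUderiv t r)
  have hzero : ∀ r, (c r * U r t)ᴴ * U r t + (U r t)ᴴ * (c r * U r t) = 0 := by
    intro r
    rw [Matrix.conjTranspose_mul, hskew]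
    simp [Matrix.mul_assoc, Matrix.neg_mul, Matrix.mul_neg]
  have hconst : W s = W t := by
    have hdiff : Differentiable ℝ W := fun r => ((hWderiv r).differentiableAt)
    have : ∀ r, deriv W r = 0 := fun r => (hWderiv r).deriv.trans (hzero r)
    exact is_const_of_deriv_eq_zero hdiff this s t
  rw [hW] at hconst
  simpa [hU1 t] using hconst

lemma aux_norm_exp_le {n : ℕ} [Nonempty (Fin n)] (A : Matrix (Fin n) (Fin n) ℂ) :
    ‖exp A‖ ≤ Real.exp ‖A‖ := by
  rw [exp_eq_tsum ℂ]
  have hs : Summable fun k : ℕ => (k.factorial : ℝ)⁻¹ * ‖A‖ ^ k := by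
    simpa [div_eq_inv_mul] using Real.summable_pow_div_factorial ‖A‖
  have hb : ∀ k : ℕ, ‖((k.factorial : ℂ)⁻¹ • A ^ k)‖ ≤ (k.factorial : ℝ)⁻¹ * ‖A‖ ^ k := by
    intro k
    rw [norm_smul]
    gcongr
    · simp
    · exact norm_pow_le A k
  calc ‖∑' k : ℕ, (k.factorial : ℂ)⁻¹ • A ^ k‖
      ≤ ∑' k : ℕ, (k.factorial : ℝ)⁻¹ * ‖A‖ ^ k :=
        norm_tsum_le_tsum_norm ((hs.of_nonneg_of_le (fun k => norm_nonneg _) hb))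
        |>.trans (Summable.tsum_le_tsum hb (hs.of_nonneg_of_le (fun k => norm_nonneg _) hb) hs)
    _ = Real.exp ‖A‖ := by
        rw [Real.exp_eq_exp_ℝ, exp_eq_tsum ℝ]
        simp [smul_eq_mul]

lemma aux_hasDerivAt_exp_smul {n : ℕ} (A : Matrix (Fin n) (Fin n) ℂ) (r : ℝ) :
    HasDerivAt (fun s : ℝ => exp (s • A)) (A * exp (r • A)) r := by
  have := hasDerivAt_exp_smul_const' (𝕂 := ℝ) A r
  exact this

lemma aux_norm_exp_sub_one {n : ℕ} [Nonempty (Fin n)] (A : Matrix (Fin n) (Fin n) ℂ) :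
    ‖exp A - 1‖ ≤ ‖A‖ * Real.exp ‖A‖ := by
  have key := Convex.norm_image_sub_le_of_norm_hasDerivWithin_le
    (f := fun s : ℝ => exp (s • A)) (f' := fun s : ℝ => A * exp (s • A))
    (s := Set.Icc (0:ℝ) 1) (C := ‖A‖ * Real.exp ‖A‖)
    (fun x _ => (aux_hasDerivAt_exp_smul A x).hasDerivWithinAt)
    (fun x hx => ?_) (convex_Icc 0 1) (Set.left_mem_Icc.2 zero_le_one)
    (Set.right_mem_Icc.2 zero_le_one)
  · simpa using key
  · calc ‖A * exp (x • A)‖ ≤ ‖A‖ * ‖exp (x • A)‖ := norm_mul_le _ _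
      _ ≤ ‖A‖ * Real.exp ‖A‖ := by
          gcongr
          refine (aux_norm_exp_le _).trans (Real.exp_le_exp.2 ?_)
          rw [norm_smul]
          calc ‖x‖ * ‖A‖ ≤ 1 * ‖A‖ := by
                gcongr
                rw [Real.norm_eq_abs, abs_le]; exact ⟨by linarith [hx.1], hx.2⟩
            _ = ‖A‖ := one_mul _

-- exp of a skew-Hermitian matrix is unitary
lemma aux_exp_skew_unitary {n : ℕ} (A : Matrix (Fin n) (Fin n) ℂ)
    (hA : Aᴴ = -A) : (exp A)ᴴ * exp A = 1 := by
  set E : ℝ → Matrix (Fin n) (Fin n) ℂ := fun r => exp (r • A) with hE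
  have hEd : ∀ r, HasDerivAt E (A * E r) r := fun r => aux_hasDerivAt_exp_smul A r
  set W : ℝ → Matrix (Fin n) (Fin n) ℂ := fun r => (E r)ᴴ * E r with hW
  have hWd : ∀ r, HasDerivAt W ((A * E r)ᴴ * E r + (E r)ᴴ * (A * E r)) r :=
    fun r => (aux_hasDerivAt_ct (hEd r)).mul (hEd r)
  have hzero : ∀ r, (A * E r)ᴴ * E r + (E r)ᴴ * (A * E r) = 0 := by
    intro r
    rw [Matrix.conjTranspose_mul, hA]
    simp [Matrix.mul_assoc, Matrix.neg_mul, Matrix.mul_neg]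
  have hconst : W 1 = W 0 := by
    have hdiff : Differentiable ℝ W := fun r => ((hWd r).differentiableAt)
    exact is_const_of_deriv_eq_zero hdiff (fun r => (hWd r).deriv.trans (hzero r)) 1 0
  have h0 : W 0 = 1 := by simp [hW, hE, NormedSpace.exp_zero]
  have h1 : W 1 = (exp A)ᴴ * exp A := by simp [hW, hE]
  rw [← h1, hconst, h0]

end Aux

set_option maxHeartbeats 2000000 in

/-- Let `c : ℝ → M_n(ℂ)` be a twice continuously differentiable curve of
skew-Hermitian matrices, with `‖c‖, ‖c'‖, ‖c''‖` bounded, and let `U(·, t)` solve the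
linear matrix ODE `U' = c(s)·U`, `U(t,t) = 1` (the time-ordered exponential). Then the
midpoint exponential approximates it to third order locally:
`‖U(t+Δ,t) − exp(c(t+Δ/2)·Δ)‖ ≤ C·Δ³` for a constant `C` depending on the bounds. -/
theorem midpoint_exponential_third_order
    (n : ℕ) (c : ℝ → Matrix (Fin n) (Fin n) ℂ) (hc : ContDiff ℝ 2 c)
    (hskew : ∀ t, (c t).conjTranspose = -(c t))
    (M₀ M₁ M₂ : ℝ)
    (hM₀ : ∀ t, ‖c t‖ ≤ M₀) (hM₁ : ∀ t, ‖deriv c t‖ ≤ M₁)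
    (hM₂ : ∀ t, ‖deriv (deriv c) t‖ ≤ M₂)
    (U : ℝ → ℝ → Matrix (Fin n) (Fin n) ℂ)
    (hU1 : ∀ t, U t t = 1)
    (hUderiv : ∀ t s, HasDerivAt (fun r => U r t) (c s * U s t) s) :
    ∃ C : ℝ, 0 ≤ C ∧ ∀ t Δ : ℝ, 0 < Δ →
      ‖U (t + Δ) t - NormedSpace.exp (Δ • c (t + Δ / 2))‖ ≤ C * Δ ^ 3 := by
  rcases Nat.eq_zero_or_pos n with hn | hn
  · subst hn
    refine ⟨0, le_rfl, fun t Δ hΔ => ?_⟩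
    have hz : U (t + Δ) t - NormedSpace.exp (Δ • c (t + Δ / 2)) = 0 := Subsingleton.elim _ _
    rw [hz, norm_zero, zero_mul]
  haveI : Nonempty (Fin n) := ⟨⟨0, hn⟩⟩
  have hM₀0 : 0 ≤ M₀ := (norm_nonneg _).trans (hM₀ 0)
  have hM₁0 : 0 ≤ M₁ := (norm_nonneg _).trans (hM₁ 0)
  have hM₂0 : 0 ≤ M₂ := (norm_nonneg _).trans (hM₂ 0)
  -- differentiability of c and deriv c
  have hcd : Differentiable ℝ c := hc.differentiable (by norm_num)
  have hcd2 : Differentiable ℝ (deriv c) := by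
    have hc' := hc
    rw [show (2 : WithTop ℕ∞) = 1 + 1 by norm_num, contDiff_succ_iff_deriv] at hc'
    exact hc'.2.2.differentiable one_ne_zero
  -- Lipschitz-type bounds via MVT
  have hlip : ∀ a b : ℝ, ‖c a - c b‖ ≤ M₁ * |a - b| := by
    intro a b
    have := Convex.norm_image_sub_le_of_norm_hasDerivWithin_le
      (f := c) (f' := deriv c) (s := Set.univ) (C := M₁)
      (fun x _ => (hcd x).hasDerivAt.hasDerivWithinAt)
      (fun x _ => hM₁ x) convex_univ (Set.mem_univ b) (Set.mem_univ a)
    simpa [Real.norm_eq_abs] using this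
  have hlip' : ∀ a b : ℝ, ‖deriv c a - deriv c b‖ ≤ M₂ * |a - b| := by
    intro a b
    have := Convex.norm_image_sub_le_of_norm_hasDerivWithin_le
      (f := deriv c) (f' := deriv (deriv c)) (s := Set.univ) (C := M₂)
      (fun x _ => (hcd2 x).hasDerivAt.hasDerivWithinAt)
      (fun x _ => hM₂ x) convex_univ (Set.mem_univ b) (Set.mem_univ a)
    simpa [Real.norm_eq_abs] using this
  -- unitarity bounds
  have hUn : ∀ t s : ℝ, ‖U s t‖ ≤ n := fun t s =>
    aux_norm_unitary _ (aux_U_unitary c hskew U hU1 hUderiv t s)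
  have hexpskewn : ∀ (r : ℝ) (τ : ℝ), ‖NormedSpace.exp (r • c τ)‖ ≤ n := by
    intro r τ
    refine aux_norm_unitary _ (aux_exp_skew_unitary _ ?_)
    have : (r • c τ)ᴴ = r • (c τ)ᴴ := by
      ext i j; simp [Matrix.conjTranspose_apply, Matrix.smul_apply, star_smul]
    rw [this, hskew, smul_neg]
  -- U close to 1
  have hUlip : ∀ t s : ℝ, ‖U s t - 1‖ ≤ (M₀ * n) * |s - t| := by
    intro t s
    have := Convex.norm_image_sub_le_of_norm_hasDerivWithin_le
      (f := fun r => U r t) (f' := fun r => c r * U r t) (s := Set.univ) (C := M₀ * n)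
      (fun x _ => (hUderiv t x).hasDerivWithinAt)
      (fun x _ => (norm_mul_le _ _).trans (mul_le_mul (hM₀ x) (hUn t x)
        (norm_nonneg _) hM₀0)) convex_univ (Set.mem_univ t) (Set.mem_univ s)
    simpa [hU1 t, Real.norm_eq_abs] using this
  -- the constant
  refine ⟨(M₂ + n * (M₀ * M₁) * Real.exp M₀ + n * (M₀ * M₁)) + 2 * n, by positivity,
    fun t Δ hΔ => ?_⟩
  set m : ℝ := t + Δ / 2 with hm
  by_cases hΔ1 : Δ ≤ 1
  swap
  · -- large Δ : crude bound
    push_neg at hΔ1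
    have h1 : ‖U (t + Δ) t - NormedSpace.exp (Δ • c m)‖ ≤ 2 * n := by
      calc ‖U (t + Δ) t - NormedSpace.exp (Δ • c m)‖
          ≤ ‖U (t + Δ) t‖ + ‖NormedSpace.exp (Δ • c m)‖ := norm_sub_le _ _
        _ ≤ n + n := add_le_add (hUn t (t + Δ)) (hexpskewn Δ m)
        _ = 2 * n := by ring
    have hn0 : (0:ℝ) ≤ (n:ℝ) := Nat.cast_nonneg n
    have hΔ3 : (1:ℝ) ≤ Δ ^ 3 := one_le_pow₀ (le_of_lt hΔ1)
    have hrest : (0:ℝ) ≤ M₂ + ↑n * (M₀ * M₁) * Real.exp M₀ + ↑n * (M₀ * M₁) := by positivity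
    have h2 : (2 : ℝ) * n ≤ 2 * n * Δ ^ 3 := by nlinarith
    calc ‖U (t + Δ) t - NormedSpace.exp (Δ • c m)‖ ≤ 2 * n * Δ ^ 3 := h1.trans h2
      _ ≤ _ := by nlinarith [pow_pos hΔ 3]
  -- small Δ
  set E : ℝ → Matrix (Fin n) (Fin n) ℂ := fun s => NormedSpace.exp ((t + Δ - s) • c m) with hE
  have hEd : ∀ s : ℝ, HasDerivAt E (-(c m * E s)) s := by
    intro s
    have hg := aux_hasDerivAt_exp_smul (c m) (t + Δ - s)
    have hf : HasDerivAt (fun s : ℝ => t + Δ - s) (-1) s := by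
      simpa using (hasDerivAt_id s).const_sub (t + Δ)
    have := HasDerivAt.scomp s hg hf
    exact this.congr_deriv (by simp [E])
  have hcomm : ∀ s : ℝ, c m * E s = E s * c m := fun s =>
    (((Commute.refl (c m)).smul_right (t + Δ - s)).exp_right).eq
  set D : ℝ → Matrix (Fin n) (Fin n) ℂ := fun s => c s - c m with hD
  set F : ℝ → Matrix (Fin n) (Fin n) ℂ := fun s => E s * (D s * U s t) with hF
  have hGd : ∀ s : ℝ, HasDerivAt (fun r => E r * U r t) (F s) s := by
    intro s
    have h := (hEd s).mul (hUderiv t s)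
    have heq : -(c m * E s) * U s t + E s * (c s * U s t) = F s := by
      rw [hcomm s, hF, hD]
      noncomm_ring
    rw [← heq]; exact h
  -- continuity
  have hcU : Continuous fun s => U s t := by
    have : Differentiable ℝ fun s => U s t := fun s => (hUderiv t s).differentiableAt
    exact this.continuous
  have hcE : Continuous E := by
    have : Differentiable ℝ E := fun s => (hEd s).differentiableAt
    exact this.continuous
  have hcD : Continuous D := (hc.continuous.sub continuous_const)
  have hcF : Continuous F := hcE.mul (hcD.mul hcU)
  -- FTC
  have hFTC : ∫ s in t..(t + Δ), F s = U (t + Δ) t - NormedSpace.exp (Δ • c m) := by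
    have := intervalIntegral.integral_eq_sub_of_hasDerivAt
      (f := fun r => E r * U r t) (f' := F) (a := t) (b := t + Δ)
      (fun s _ => hGd s) (hcF.intervalIntegrable t (t + Δ))
    rw [this]
    have e1 : E (t + Δ) = 1 := by simp [hE, NormedSpace.exp_zero]
    have e2 : E t = NormedSpace.exp (Δ • c m) := by simp [hE]
    show E (t + Δ) * U (t + Δ) t - E t * U t t = _
    rw [e1, e2, one_mul, hU1 t, mul_one]
  -- decompose the integrand
  set g₁ : ℝ → Matrix (Fin n) (Fin n) ℂ := fun s => (E s - 1) * (D s * U s t) with hg₁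
  set g₂ : ℝ → Matrix (Fin n) (Fin n) ℂ := fun s => D s * (U s t - 1) with hg₂
  set g₃ : ℝ → Matrix (Fin n) (Fin n) ℂ := fun s => (s - m) • deriv c m with hg₃
  set g₄ : ℝ → Matrix (Fin n) (Fin n) ℂ := fun s => D s - (s - m) • deriv c m with hg₄
  have hdecomp : ∀ s, F s = g₁ s + g₂ s + g₃ s + g₄ s := by
    intro s
    have h34 : g₃ s + g₄ s = D s := by simp only [hg₃, hg₄]; abel
    have : F s = g₁ s + g₂ s + D s := by simp only [hF, hg₁, hg₂]; noncomm_ring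
    rw [this, ← h34]; abel
  have hig₁ : @IntervalIntegrable _ PseudoMetricSpace.toUniformSpace.toTopologicalSpace _ g₁ MeasureTheory.volume t (t + Δ) :=
    ((hcE.sub continuous_const).mul (hcD.mul hcU)).intervalIntegrable _ _
  have hig₂ : @IntervalIntegrable _ PseudoMetricSpace.toUniformSpace.toTopologicalSpace _ g₂ MeasureTheory.volume t (t + Δ) :=
    (hcD.mul (hcU.sub continuous_const)).intervalIntegrable _ _
  have hig₃ : @IntervalIntegrable _ PseudoMetricSpace.toUniformSpace.toTopologicalSpace _ g₃ MeasureTheory.volume t (t + Δ) :=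
    (((continuous_id.sub continuous_const).smul continuous_const)).intervalIntegrable _ _
  have hig₄ : @IntervalIntegrable _ PseudoMetricSpace.toUniformSpace.toTopologicalSpace _ g₄ MeasureTheory.volume t (t + Δ) :=
    (hcD.sub ((continuous_id.sub continuous_const).smul continuous_const)).intervalIntegrable _ _
  have hsplit : ∫ s in t..(t + Δ), F s =
      (∫ s in t..(t + Δ), g₁ s) + (∫ s in t..(t + Δ), g₂ s) +
      (∫ s in t..(t + Δ), g₃ s) + (∫ s in t..(t + Δ), g₄ s) := by
    calc ∫ s in t..(t + Δ), F s
        = ∫ s in t..(t + Δ), (g₁ s + g₂ s + g₃ s + g₄ s) :=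
          intervalIntegral.integral_congr fun s _ => hdecomp s
      _ = _ := by
          rw [intervalIntegral.integral_add ((hig₁.add hig₂).add hig₃) hig₄,
              intervalIntegral.integral_add (hig₁.add hig₂) hig₃,
              intervalIntegral.integral_add hig₁ hig₂]
  have hg₃0 : (∫ s in t..(t + Δ), g₃ s) = 0 := by
    rw [hg₃]
    rw [intervalIntegral.integral_smul_const]
    have : (∫ s in t..(t + Δ), (s - m)) = 0 := by
      rw [intervalIntegral.integral_comp_sub_right (fun x => x) m, integral_id, hm]
      ring
    rw [this, zero_smul]
  -- pointwise bounds on Ioc t (t+Δ)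
  have hmem : ∀ s ∈ Set.uIoc t (t + Δ), t < s ∧ s ≤ t + Δ := by
    intro s hs
    rw [Set.uIoc_of_le (by linarith)] at hs
    exact ⟨hs.1, hs.2⟩
  have hb₁ : ∀ s ∈ Set.uIoc t (t + Δ), ‖g₁ s‖ ≤ (n * (M₀ * M₁) * Real.exp M₀) * Δ ^ 2 := by
    intro s hs
    obtain ⟨hs1, hs2⟩ := hmem s hs
    have hEs : ‖E s - 1‖ ≤ (M₀ * Δ) * Real.exp M₀ := by
      have h1 : ‖(t + Δ - s) • c m‖ ≤ M₀ * Δ := by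
        rw [norm_smul, Real.norm_eq_abs]
        calc |t + Δ - s| * ‖c m‖ ≤ Δ * M₀ := by
              apply mul_le_mul _ (hM₀ m) (norm_nonneg _) (le_of_lt hΔ)
              rw [abs_le]; constructor <;> linarith
          _ = M₀ * Δ := by ring
      calc ‖E s - 1‖ ≤ ‖(t + Δ - s) • c m‖ * Real.exp ‖(t + Δ - s) • c m‖ :=
            aux_norm_exp_sub_one _
        _ ≤ (M₀ * Δ) * Real.exp M₀ := by
            apply mul_le_mul h1 (Real.exp_le_exp.2 (h1.trans (by nlinarith)))
              (Real.exp_nonneg _) (by positivity)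
    have hDs : ‖D s‖ ≤ M₁ * Δ := by
      refine (hlip s m).trans ?_
      have : |s - m| ≤ Δ := by rw [hm, abs_le]; constructor <;> linarith
      nlinarith
    calc ‖g₁ s‖ ≤ ‖E s - 1‖ * (‖D s‖ * ‖U s t‖) :=
          (norm_mul_le _ _).trans (by gcongr; exact norm_mul_le _ _)
      _ ≤ ((M₀ * Δ) * Real.exp M₀) * ((M₁ * Δ) * n) := by
          apply mul_le_mul hEs _ (by positivity) (by positivity)
          apply mul_le_mul hDs (hUn t s) (norm_nonneg _) (by positivity)
      _ = (n * (M₀ * M₁) * Real.exp M₀) * Δ ^ 2 := by ring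
  have hb₂ : ∀ s ∈ Set.uIoc t (t + Δ), ‖g₂ s‖ ≤ (n * (M₀ * M₁)) * Δ ^ 2 := by
    intro s hs
    obtain ⟨hs1, hs2⟩ := hmem s hs
    have hDs : ‖D s‖ ≤ M₁ * Δ := by
      refine (hlip s m).trans ?_
      have : |s - m| ≤ Δ := by rw [hm, abs_le]; constructor <;> linarith
      nlinarith
    have hUs : ‖U s t - 1‖ ≤ (M₀ * n) * Δ := by
      refine (hUlip t s).trans ?_
      have : |s - t| ≤ Δ := by rw [abs_le]; constructor <;> linarith
      have h0 : (0:ℝ) ≤ M₀ * n := by positivity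
      nlinarith
    calc ‖g₂ s‖ ≤ ‖D s‖ * ‖U s t - 1‖ := norm_mul_le _ _
      _ ≤ (M₁ * Δ) * ((M₀ * n) * Δ) :=
          mul_le_mul hDs hUs (norm_nonneg _) (by positivity)
      _ = (n * (M₀ * M₁)) * Δ ^ 2 := by ring
  have hb₄ : ∀ s ∈ Set.uIoc t (t + Δ), ‖g₄ s‖ ≤ M₂ * Δ ^ 2 := by
    intro s hs
    obtain ⟨hs1, hs2⟩ := hmem s hs
    -- Taylor remainder via MVT on [m, s]
    have key := Convex.norm_image_sub_le_of_norm_hasDerivWithin_le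
      (f := fun x => c x - (x - m) • deriv c m)
      (f' := fun x => deriv c x - deriv c m)
      (s := Set.uIcc m s) (C := M₂ * Δ)
      (fun x _ => ((hcd x).hasDerivAt.sub
        (((hasDerivAt_id x).sub_const m).smul_const (deriv c m))).hasDerivWithinAt
        |>.congr_deriv (by simp; rfl))
      (fun x hx => ?_) (convex_uIcc m s) Set.left_mem_uIcc Set.right_mem_uIcc
    · have : ‖(c s - (s - m) • deriv c m) - (c m - (m - m) • deriv c m)‖ ≤ (M₂ * Δ) * ‖s - m‖ :=
        key
      simp only [sub_self, zero_smul, sub_zero] at this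
      have habs : ‖s - m‖ ≤ Δ := by
        rw [Real.norm_eq_abs, hm, abs_le]; constructor <;> linarith
      calc ‖g₄ s‖ = ‖(c s - (s - m) • deriv c m) - c m‖ := by
            rw [hg₄, hD, sub_right_comm]
        _ ≤ (M₂ * Δ) * ‖s - m‖ := this
        _ ≤ (M₂ * Δ) * Δ := by gcongr
        _ = M₂ * Δ ^ 2 := by ring
    · -- derivative bound on uIcc m s
      refine (hlip' x m).trans ?_
      have habs : |x - m| ≤ Δ := by
        rcases Set.mem_uIcc.mp hx with ⟨h1, h2⟩ | ⟨h1, h2⟩ <;>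
          (rw [abs_le]; constructor <;> simp only [hm] at * <;> linarith)
      nlinarith
  -- assemble
  have hIabs : |t + Δ - t| = Δ := by rw [add_sub_cancel_left]; exact abs_of_pos hΔ
  have hI₁ : ‖∫ s in t..(t + Δ), g₁ s‖ ≤ (↑n * (M₀ * M₁) * Real.exp M₀) * Δ ^ 2 * Δ := by
    have := intervalIntegral.norm_integral_le_of_norm_le_const hb₁
    rwa [hIabs] at this
  have hI₂ : ‖∫ s in t..(t + Δ), g₂ s‖ ≤ (↑n * (M₀ * M₁)) * Δ ^ 2 * Δ := by
    have := intervalIntegral.norm_integral_le_of_norm_le_const hb₂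
    rwa [hIabs] at this
  have hI₄ : ‖∫ s in t..(t + Δ), g₄ s‖ ≤ M₂ * Δ ^ 2 * Δ := by
    have := intervalIntegral.norm_integral_le_of_norm_le_const hb₄
    rwa [hIabs] at this
  have hfinal : ‖U (t + Δ) t - NormedSpace.exp (Δ • c m)‖ ≤
      (M₂ + ↑n * (M₀ * M₁) * Real.exp M₀ + ↑n * (M₀ * M₁)) * Δ ^ 3 := by
    calc ‖U (t + Δ) t - NormedSpace.exp (Δ • c m)‖
        = ‖(∫ s in t..(t + Δ), g₁ s) + (∫ s in t..(t + Δ), g₂ s) +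
            (∫ s in t..(t + Δ), g₄ s)‖ := by
          rw [← hFTC, hsplit, hg₃0, add_zero]
      _ ≤ ‖(∫ s in t..(t + Δ), g₁ s)‖ + ‖(∫ s in t..(t + Δ), g₂ s)‖ +
            ‖(∫ s in t..(t + Δ), g₄ s)‖ :=
          (norm_add_le _ _).trans (by gcongr; exact norm_add_le _ _)
      _ ≤ (↑n * (M₀ * M₁) * Real.exp M₀) * Δ ^ 2 * Δ + (↑n * (M₀ * M₁)) * Δ ^ 2 * Δ +
            M₂ * Δ ^ 2 * Δ := by gcongr
      _ = (M₂ + ↑n * (M₀ * M₁) * Real.exp M₀ + ↑n * (M₀ * M₁)) * Δ ^ 3 := by ring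
  refine hfinal.trans ?_
  have h2n : (0:ℝ) ≤ 2 * n * Δ ^ 3 := by positivity
  nlinarith
end

section
/- In SU(2), the curve C(t) = exp((i t/2)(cos φ₀ · σ_x + sin φ₀ · σ_z + β σ_y)) · exp(−(i t/2) β σ_y) is horizontal for the distribution spanned by (i/2)σ_x and (i/2)σ_z: its logarithmic derivative C(t)⁻¹ C'(t) equals (i/2)(cos(βt + φ₀) σ_x + sin(βt + φ₀) σ_z) and hence lies in span{(i/2)σ_x, (i/2)σ_z} for all t. -/
attribute [local instance] Matrix.linftyOpNormedAddCommGroup Matrix.linftyOpNormedRing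
  Matrix.linftyOpNormedAlgebra

/-- The Pauli matrix `σ_x`. -/
def pauliX : Matrix (Fin 2) (Fin 2) ℂ := !![0, 1; 1, 0]

/-- The Pauli matrix `σ_y`. -/
def pauliY : Matrix (Fin 2) (Fin 2) ℂ := !![0, -Complex.I; Complex.I, 0]

/-- The Pauli matrix `σ_z`. -/
def pauliZ : Matrix (Fin 2) (Fin 2) ℂ := !![1, 0; 0, -1]

open Complex Matrix

lemma exp_smul_pauliY (c : ℂ) :
    NormedSpace.exp (c • pauliY) =
      !![(Complex.exp c + Complex.exp (-c))/2, Complex.I*(Complex.exp (-c) - Complex.exp c)/2;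
         Complex.I*(Complex.exp c - Complex.exp (-c))/2, (Complex.exp c + Complex.exp (-c))/2] := by
  have hU : (!![1,1;Complex.I,-Complex.I] : Matrix (Fin 2) (Fin 2) ℂ)⁻¹ =
      !![1/2, -Complex.I/2; 1/2, Complex.I/2] := by
    apply Matrix.inv_eq_right_inv
    ext i j
    fin_cases i <;> fin_cases j <;>
      (simp [Matrix.mul_apply, Fin.sum_univ_two, Complex.ext_iff]; try norm_num)
  have hunit : IsUnit (!![1,1;Complex.I,-Complex.I] : Matrix (Fin 2) (Fin 2) ℂ) := by
    rw [Matrix.isUnit_iff_isUnit_det]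
    simp only [Matrix.det_fin_two_of, isUnit_iff_ne_zero]
    simp [Complex.ext_iff]
    norm_num
  have key : c • pauliY =
      !![1,1;Complex.I,-Complex.I] * Matrix.diagonal ![c, -c] *
        (!![1,1;Complex.I,-Complex.I] : Matrix (Fin 2) (Fin 2) ℂ)⁻¹ := by
    rw [hU]
    ext i j
    fin_cases i <;> fin_cases j <;>
      simp [pauliY, Matrix.mul_apply, Fin.sum_univ_two, Matrix.vecMul_diagonal] <;> ring
  rw [key, Matrix.exp_conj _ _ hunit, Matrix.exp_diagonal, hU]
  ext i j
  fin_cases i <;> fin_cases j <;>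
    simp [Matrix.mul_apply, Fin.sum_univ_two, Matrix.vecMul_diagonal, Pi.coe_exp, ← Complex.exp_eq_exp_ℂ] <;> (ring_nf; try simp [Complex.I_sq]; try ring)

set_option maxHeartbeats 2000000 in
lemma horizontal_key (φ₀ β t : ℝ) :
    ((Complex.I/2) • (Real.cos φ₀ • pauliX + Real.sin φ₀ • pauliZ + β • pauliY)) *
        NormedSpace.exp (((t : ℂ) * -(Complex.I * β / 2)) • pauliY)
      + NormedSpace.exp (((t : ℂ) * -(Complex.I * β / 2)) • pauliY) *
        ((-(Complex.I * β / 2) : ℂ) • pauliY)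
    = NormedSpace.exp (((t : ℂ) * -(Complex.I * β / 2)) • pauliY) *
        ((Complex.I/2) • (Real.cos (β*t+φ₀) • pauliX + Real.sin (β*t+φ₀) • pauliZ)) := by
  rw [exp_smul_pauliY]
  have harg : ((t : ℂ) * -(Complex.I * β / 2)) = -((β:ℂ)*t/2*I) := by ring
  ext i j
  fin_cases i <;> fin_cases j <;>
    simp [pauliX, pauliY, pauliZ, Matrix.mul_apply, Fin.sum_univ_two, Complex.real_smul,
      smul_eq_mul] <;>
  · simp only [Complex.ofReal_cos, Complex.ofReal_sin, Complex.ofReal_add, Complex.ofReal_mul,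
      Complex.cos, Complex.sin]
    rw [show ((t:ℂ) * (I * (β:ℂ) / 2)) = (β:ℂ)*t/2*I by ring,
      show ((-((β:ℂ)*t+(φ₀:ℂ))) * I) = -((β:ℂ)*t/2*I + ((β:ℂ)*t/2*I + (φ₀:ℂ)*I)) by ring,
      show (((β:ℂ)*t+(φ₀:ℂ)) * I) = (β:ℂ)*t/2*I + ((β:ℂ)*t/2*I + (φ₀:ℂ)*I) by ring,
      show ((-(φ₀:ℂ)) * I) = -((φ₀:ℂ)*I) by ring]
    simp only [neg_add, neg_neg, Complex.exp_add, Complex.exp_neg]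
    generalize hp : Complex.exp ((β:ℂ)*t/2*I) = p
    generalize hq : Complex.exp ((φ₀:ℂ)*I) = q
    have hp0 : p ≠ 0 := hp ▸ Complex.exp_ne_zero _
    have hq0 : q ≠ 0 := hq ▸ Complex.exp_ne_zero _
    field_simp
    simp only [sq, Complex.I_mul_I]
    have h3 : Complex.I ^ 3 = -Complex.I := by
      have h : Complex.I ^ 3 = Complex.I ^ 2 * Complex.I := by ring
      rw [h, Complex.I_sq]; ring
    ring_nf
    try rw [h3]
    try ring


/-- In SU(2), the curve
`C(t) = exp((i t/2)(cos φ₀ σ_x + sin φ₀ σ_z + β σ_y)) · exp(−(i t/2) β σ_y)`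
is horizontal for the distribution spanned by `(i/2)σ_x` and `(i/2)σ_z`: its
logarithmic derivative is `C'(t) = C(t)·c(t)` with
`c(t) = (i/2)(cos(βt+φ₀) σ_x + sin(βt+φ₀) σ_z)`, which lies in
`span_ℝ{(i/2)σ_x, (i/2)σ_z}` for all `t`. -/
theorem subriemannian_geodesic_horizontal (φ₀ β : ℝ) :
    ∀ t : ℝ,
      HasDerivAt
        (fun s : ℝ =>
          NormedSpace.exp ((Complex.I * s / 2) •
              (Real.cos φ₀ • pauliX + Real.sin φ₀ • pauliZ + β • pauliY)) *
          NormedSpace.exp ((-(Complex.I * s / 2) * β) • pauliY))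
        ((NormedSpace.exp ((Complex.I * t / 2) •
              (Real.cos φ₀ • pauliX + Real.sin φ₀ • pauliZ + β • pauliY)) *
          NormedSpace.exp ((-(Complex.I * t / 2) * β) • pauliY)) *
         ((Complex.I / 2) •
            (Real.cos (β * t + φ₀) • pauliX + Real.sin (β * t + φ₀) • pauliZ))) t ∧
      (Complex.I / 2) • (Real.cos (β * t + φ₀) • pauliX + Real.sin (β * t + φ₀) • pauliZ)
        ∈ Submodule.span ℝ
            ({(Complex.I / 2) • pauliX, (Complex.I / 2) • pauliZ} :
              Set (Matrix (Fin 2) (Fin 2) ℂ)) := by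

  intro t
  constructor
  · set M : Matrix (Fin 2) (Fin 2) ℂ :=
      Real.cos φ₀ • pauliX + Real.sin φ₀ • pauliZ + (β : ℝ) • pauliY with hM
    set A : Matrix (Fin 2) (Fin 2) ℂ := (Complex.I / 2) • M with hAdef
    set B : Matrix (Fin 2) (Fin 2) ℂ := (-(Complex.I * (β : ℂ) / 2)) • pauliY with hBdef
    have hA : ∀ s : ℝ, (Complex.I * (s : ℂ) / 2) • M = (s : ℂ) • A := by
      intro s; rw [hAdef, smul_smul]; congr 1; ring
    have hB : ∀ s : ℝ, (-(Complex.I * (s : ℂ) / 2) * (β : ℂ)) • pauliY = (s : ℂ) • B := by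
      intro s; rw [hBdef, smul_smul]; congr 1; ring
    have hf : HasDerivAt (fun s : ℝ => NormedSpace.exp ((s : ℂ) • A))
        (NormedSpace.exp ((t : ℂ) • A) * A) t := by
      have h := (hasDerivAt_exp_smul_const A (t : ℂ)).scomp t Complex.ofRealCLM.hasDerivAt
      rw [Complex.ofRealCLM_apply, Complex.ofReal_one, one_smul] at h
      exact h
    have hg : HasDerivAt (fun s : ℝ => NormedSpace.exp ((s : ℂ) • B))
        (NormedSpace.exp ((t : ℂ) • B) * B) t := by
      have h := (hasDerivAt_exp_smul_const B (t : ℂ)).scomp t Complex.ofRealCLM.hasDerivAt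
      rw [Complex.ofRealCLM_apply, Complex.ofReal_one, one_smul] at h
      exact h
    have hmul := hf.mul hg
    simp only [hA, hB]
    convert hmul using 1
    case e'_4 | e'_5 | e'_6 | e'_8 => rfl
    have hEB : (t : ℂ) • B = ((t : ℂ) * -(Complex.I * (β : ℂ) / 2)) • pauliY := by
      rw [hBdef, smul_smul]
    have key := horizontal_key φ₀ β t
    rw [hEB, hAdef]
    rw [mul_assoc, ← key, hM]
    rw [mul_add, ← mul_assoc]
  · have hx : (Complex.I / 2) •
        (Real.cos (β * t + φ₀) • pauliX + Real.sin (β * t + φ₀) • pauliZ)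
        = Real.cos (β * t + φ₀) • ((Complex.I / 2) • pauliX)
          + Real.sin (β * t + φ₀) • ((Complex.I / 2) • pauliZ) := by
      rw [smul_add, smul_comm ((Complex.I : ℂ) / 2) (Real.cos (β * t + φ₀)),
        smul_comm ((Complex.I : ℂ) / 2) (Real.sin (β * t + φ₀))]
    rw [hx]
    exact Submodule.add_mem _
      (Submodule.smul_mem _ _ (Submodule.subset_span (Set.mem_insert _ _)))
      (Submodule.smul_mem _ _ (Submodule.subset_span (Set.mem_insert_of_mem _ rfl)))
end
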